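/- Let Y be a finite set, E : Y → Finset Y symmetric and irreflexive, F : Y → Finset Y with E(u) and F(u) disjoint for each u, and suppose for all distinct u, v ∈ Y exactly one of the following holds: v ∈ E(u) (equivalently u ∈ E(v)), or v ∈ F(u), or u ∈ F(v). Define f(x) = c + ∑_{u∈Y} L_u x_u + (1/2)∑_{u∈Y}∑_{v∈E(u)}(1+x_u)(1-x_v) + 2∑_{u∈Y}∑_{v∈F(u)} x_u(1-x_v) for real constants c and L_u. Then f(x) = c' + ∑_{u∈Y}(L_u + 2|F(u)|)x_u + (1/2)∑_{u,v∈Y} q_{u,v} x_u x_v, where c' = c + (1/2)∑_{u∈Y}|E(u)|, q_{u,v} = 0 if u = v, q_{u,v} = -1 if v ∈ E(u), and q_{u,v} = -2 otherwise. -/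

import Mathlib

lemma sum_mem_eq_sum_ite {Y : Type*} [Fintype Y] [DecidableEq Y]
    (s : Finset Y) (g : Y → ℝ) :
    ∑ v ∈ s, g v = ∑ v : Y, if v ∈ s then g v else 0 := by
  rw [Finset.sum_ite_mem, Finset.univ_inter]

lemma sum_swap_symmE {Y : Type*} [Fintype Y] [DecidableEq Y]
    (E : Y → Finset Y) (hE : ∀ u v : Y, v ∈ E u ↔ u ∈ E v) (g : Y → Y → ℝ) :
    ∑ u : Y, ∑ v ∈ E u, g u v = ∑ u : Y, ∑ v ∈ E u, g v u := by
  have h1 : ∑ u : Y, ∑ v ∈ E u, g u v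
      = ∑ u : Y, ∑ v : Y, if v ∈ E u then g u v else 0 :=
    Finset.sum_congr rfl fun u _ => sum_mem_eq_sum_ite _ _
  rw [h1, Finset.sum_comm]
  refine Finset.sum_congr rfl fun v _ => ?_
  have h2 : ∑ u : Y, (if v ∈ E u then g u v else 0)
      = ∑ u : Y, (if u ∈ E v then g u v else 0) :=
    Finset.sum_congr rfl fun u _ => by simp only [hE u v]
  rw [h2, ← sum_mem_eq_sum_ite]

lemma sum_swap_rev {Y : Type*} [Fintype Y] [DecidableEq Y]
    (F : Y → Finset Y) (g : Y → Y → ℝ) :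
    ∑ u : Y, ∑ v : Y, (if u ∈ F v then g u v else 0)
      = ∑ u : Y, ∑ v ∈ F u, g v u := by
  rw [Finset.sum_comm]
  exact Finset.sum_congr rfl fun v _ => (sum_mem_eq_sum_ite _ _).symm

/-- Proposition 3.1 of the paper in abstract form: the cost function
`f(x) = c + ∑ L_u x_u + (1/2)∑_{u}∑_{v∈E(u)}(1+x_u)(1-x_v) + 2∑_{u}∑_{v∈F(u)} x_u(1-x_v)`
equals `c + (1/2)∑|E(u)| + ∑(L_u + 2|F(u)|)x_u + (1/2)∑_{u,v} q_{u,v} x_u x_v`,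
where `q_{u,v} = 0` if `u = v`, `-1` if `v ∈ E(u)`, and `-2` otherwise. -/
theorem quadratic_model_decomposition (Y : Type*) [Fintype Y] [DecidableEq Y]
    (E F : Y → Finset Y)
    (hE : ∀ u v : Y, v ∈ E u ↔ u ∈ E v)
    (hEirr : ∀ u : Y, u ∉ E u)
    (hEF : ∀ u : Y, E u ∩ F u = ∅)
    (hFirr : ∀ u : Y, u ∉ F u)
    (htri : ∀ u v : Y, u ≠ v →
      (v ∈ E u ∧ v ∉ F u ∧ u ∉ F v) ∨ (v ∉ E u ∧ v ∈ F u ∧ u ∉ F v) ∨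
      (v ∉ E u ∧ v ∉ F u ∧ u ∈ F v))
    (c : ℝ) (L : Y → ℝ) (x : Y → ℝ) :
    c + ∑ u : Y, L u * x u
      + (1 / 2) * ∑ u : Y, ∑ v ∈ E u, (1 + x u) * (1 - x v)
      + 2 * ∑ u : Y, ∑ v ∈ F u, x u * (1 - x v)
    = (c + (1 / 2) * ∑ u : Y, ((E u).card : ℝ))
      + ∑ u : Y, (L u + 2 * ((F u).card : ℝ)) * x u
      + (1 / 2) * ∑ u : Y, ∑ v : Y,
          (if u = v then (0 : ℝ) else if v ∈ E u then -1 else -2) * x u * x v := by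
  -- disjointness of E u and F u, pointwise
  have hEFd : ∀ u v : Y, v ∈ E u → v ∉ F u := by
    intro u v he hf
    have : v ∈ E u ∩ F u := Finset.mem_inter.mpr ⟨he, hf⟩
    rw [hEF u] at this
    exact absurd this (Finset.notMem_empty v)
  -- Expand the E double sum
  have h1 : ∑ u : Y, ∑ v ∈ E u, (1 + x u) * (1 - x v)
      = (∑ u : Y, ((E u).card : ℝ)) - ∑ u : Y, ∑ v ∈ E u, x u * x v := by
    have expand : ∀ u : Y, ∑ v ∈ E u, (1 + x u) * (1 - x v)
        = ((E u).card : ℝ) + ((E u).card : ℝ) * x u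
          - (∑ v ∈ E u, x v) - ∑ v ∈ E u, x u * x v := by
      intro u
      have : ∀ v : Y, (1 + x u) * (1 - x v) = 1 + x u - x v - x u * x v := by
        intro v; ring
      simp only [this]
      rw [Finset.sum_sub_distrib, Finset.sum_sub_distrib, Finset.sum_add_distrib,
        Finset.sum_const, Finset.sum_const]

      ring
    simp only [expand]
    have hsw : ∑ u : Y, ∑ v ∈ E u, x v = ∑ u : Y, ∑ v ∈ E u, x u := by
      simpa using sum_swap_symmE E hE (fun u v => x v)
    rw [Finset.sum_sub_distrib, Finset.sum_sub_distrib, Finset.sum_add_distrib, hsw]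
    have : ∀ u : Y, ∑ v ∈ E u, x u = ((E u).card : ℝ) * x u := by
      intro u; rw [Finset.sum_const, nsmul_eq_mul]
    simp only [this]
    ring
  -- Expand the F double sum
  have h2 : ∑ u : Y, ∑ v ∈ F u, x u * (1 - x v)
      = (∑ u : Y, ((F u).card : ℝ) * x u) - ∑ u : Y, ∑ v ∈ F u, x u * x v := by
    rw [← Finset.sum_sub_distrib]
    refine Finset.sum_congr rfl fun u _ => ?_
    have : ∀ v : Y, x u * (1 - x v) = x u - x u * x v := by intro v; ring
    simp only [this]
    rw [Finset.sum_sub_distrib, Finset.sum_const, nsmul_eq_mul, mul_comm]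
  -- Decompose the quadratic coefficient sum
  have h3 : ∑ u : Y, ∑ v : Y,
        (if u = v then (0 : ℝ) else if v ∈ E u then -1 else -2) * x u * x v
      = -(∑ u : Y, ∑ v ∈ E u, x u * x v) - 4 * ∑ u : Y, ∑ v ∈ F u, x u * x v := by
    have point : ∀ u v : Y,
        (if u = v then (0 : ℝ) else if v ∈ E u then -1 else -2) * x u * x v
        = (if v ∈ E u then -(x u * x v) else 0)
          + (if v ∈ F u then -2 * (x u * x v) else 0)
          + (if u ∈ F v then -2 * (x u * x v) else 0) := by
      intro u v
      by_cases huv : u = v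
      · subst huv
        simp [hEirr u, hFirr u]
      · rcases htri u v huv with ⟨h1, h2, h3⟩ | ⟨h1, h2, h3⟩ | ⟨h1, h2, h3⟩ <;>
          simp [h1, h2, h3, huv] <;> ring
    simp only [point]
    have split : ∑ u : Y, ∑ v : Y,
        ((if v ∈ E u then -(x u * x v) else 0)
          + (if v ∈ F u then -2 * (x u * x v) else 0)
          + (if u ∈ F v then -2 * (x u * x v) else 0))
        = (∑ u : Y, ∑ v : Y, (if v ∈ E u then -(x u * x v) else 0))
          + (∑ u : Y, ∑ v : Y, (if v ∈ F u then -2 * (x u * x v) else 0))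
          + (∑ u : Y, ∑ v : Y, (if u ∈ F v then -2 * (x u * x v) else 0)) := by
      simp [Finset.sum_add_distrib]
    rw [split]
    have e1 : ∑ u : Y, ∑ v : Y, (if v ∈ E u then -(x u * x v) else 0)
        = -(∑ u : Y, ∑ v ∈ E u, x u * x v) := by
      rw [← Finset.sum_neg_distrib]
      refine Finset.sum_congr rfl fun u _ => ?_
      rw [← sum_mem_eq_sum_ite (E u) (fun v => -(x u * x v))]
      exact Finset.sum_neg_distrib _
    have e2 : ∑ u : Y, ∑ v : Y, (if v ∈ F u then -2 * (x u * x v) else 0)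
        = -2 * ∑ u : Y, ∑ v ∈ F u, x u * x v := by
      rw [Finset.mul_sum]
      refine Finset.sum_congr rfl fun u _ => ?_
      rw [← sum_mem_eq_sum_ite (F u) (fun v => -2 * (x u * x v)), ← Finset.mul_sum]
    have e3 : ∑ u : Y, ∑ v : Y, (if u ∈ F v then -2 * (x u * x v) else 0)
        = -2 * ∑ u : Y, ∑ v ∈ F u, x u * x v := by
      rw [sum_swap_rev F (fun u v => -2 * (x u * x v)), Finset.mul_sum]
      refine Finset.sum_congr rfl fun u _ => ?_
      rw [Finset.mul_sum]
      exact Finset.sum_congr rfl fun v _ => by ring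
    rw [e1, e2, e3]; ring
  rw [h1, h2, h3]
  have hL : ∑ u : Y, (L u + 2 * ((F u).card : ℝ)) * x u
      = ∑ u : Y, L u * x u + 2 * ∑ u : Y, ((F u).card : ℝ) * x u := by
    rw [Finset.mul_sum, ← Finset.sum_add_distrib]
    exact Finset.sum_congr rfl fun u _ => by ring
  rw [hL]
  ring
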